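/- Let d ≥ 1, k > 1, and let f : ℝ^d → ℝ be five times continuously differentiable with ‖D⁵f(x)‖ ≤ M for all x ∈ ℝ^d. Then there exists a constant C (depending only on k and M) such that for every θ ∈ ℝ^d, every unit vector w ∈ ℝ^d, and every c > 0, | ∇f(θ) · w − ( −f(θ + k c w) + k³ f(θ + c w) − k³ f(θ − c w) + f(θ − k c w) ) / ( 2 k (k² − 1) c ) | ≤ C c⁴. -/

import Mathlib

open Set

/-- On a set with unique differentiability, the within-iterated-derivative of a `C⁵`
function agrees with the global one. -/
lemma my_itDW {g : ℝ → ℝ} (hg : ContDiff ℝ 5 g) {s : Set ℝ} (hs : UniqueDiffOn ℝ s)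
    {n : ℕ} (hn : n ≤ 5) {x : ℝ} (hx : x ∈ s) :
    iteratedDerivWithin n g s x = iteratedDeriv n g x := by
  rw [iteratedDerivWithin_eq_iteratedFDerivWithin, iteratedDeriv_eq_iteratedFDeriv]
  congr 1
  have H : HasFTaylorSeriesUpToOn 5 g (ftaylorSeriesWithin ℝ g Set.univ) s :=
    ((hg.contDiffOn).ftaylorSeriesWithin uniqueDiffOn_univ).mono (Set.subset_univ s)
  have := H.eq_iteratedFDerivWithin_of_uniqueDiffOn (by exact_mod_cast hn) hs hx
  rw [← this]
  simp [ftaylorSeriesWithin, iteratedFDerivWithin_univ]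

/-- The degree-4 Taylor polynomial of `g` at `0`. -/
noncomputable def myP (g : ℝ → ℝ) (t : ℝ) : ℝ :=
  ∑ i ∈ Finset.range 5, ((Nat.factorial i : ℝ)⁻¹ * t ^ i) * iteratedDeriv i g 0

lemma my_taylor_nonneg {g : ℝ → ℝ} (hg : ContDiff ℝ 5 g) {M' : ℝ}
    (hM' : ∀ s, |iteratedDeriv 5 g s| ≤ M') {t : ℝ} (ht : 0 ≤ t) :
    |g t - myP g t| ≤ M' * t ^ 5 / 24 := by
  have hM0 : 0 ≤ M' := le_trans (abs_nonneg _) (hM' 0)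
  rcases eq_or_lt_of_le ht with rfl | ht
  · have : myP g 0 = g 0 := by
      simp [myP, Finset.sum_range_succ]
    rw [this]
    simp
  · have hud : UniqueDiffOn ℝ (Icc (0:ℝ) t) := uniqueDiffOn_Icc ht
    have key := taylor_mean_remainder_bound (f := g) (a := 0) (b := t) (C := M') (n := 4)
      ht.le (hg.contDiffOn) (right_mem_Icc.mpr ht.le) ?_
    · have hP : taylorWithinEval g 4 (Icc (0:ℝ) t) 0 t = myP g t := by
        rw [taylor_within_apply, myP]
        refine Finset.sum_congr rfl fun i hi => ?_
        have hi5 : i ≤ 5 := by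
          have := Finset.mem_range.mp hi; omega
        rw [my_itDW hg hud hi5 (left_mem_Icc.mpr ht.le)]
        norm_num
      rw [hP] at key
      calc |g t - myP g t| ≤ M' * (t - 0) ^ (4+1) / (Nat.factorial 4 : ℝ) := key
        _ = M' * t ^ 5 / 24 := by norm_num [Nat.factorial]
    · intro y hy
      rw [my_itDW hg hud (by norm_num) hy]
      exact hM' y

lemma my_taylor {g : ℝ → ℝ} (hg : ContDiff ℝ 5 g) {M' : ℝ}
    (hM' : ∀ s, |iteratedDeriv 5 g s| ≤ M') (t : ℝ) :
    |g t - myP g t| ≤ M' * |t| ^ 5 / 24 := by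
  rcases le_or_gt 0 t with ht | ht
  · rw [abs_of_nonneg ht]; exact my_taylor_nonneg hg hM' ht
  · have hch : ContDiff ℝ 5 (fun s => g (-s)) := hg.comp contDiff_neg
    have hMh : ∀ s, |iteratedDeriv 5 (fun s => g (-s)) s| ≤ M' := by
      intro s
      rw [iteratedDeriv_comp_neg]
      simpa [abs_mul] using hM' (-s)
    have hPh : myP (fun s => g (-s)) (-t) = myP g t := by
      unfold myP
      refine Finset.sum_congr rfl fun i _ => ?_
      rw [iteratedDeriv_comp_neg, neg_zero]
      simp only [smul_eq_mul]
      rw [show ((Nat.factorial i : ℝ)⁻¹ * (-t) ^ i) * ((-1:ℝ) ^ i * iteratedDeriv i g 0)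
            = ((-1:ℝ)^i * (-t) ^ i) * ((Nat.factorial i : ℝ)⁻¹ * iteratedDeriv i g 0) by ring]
      rw [← neg_pow, neg_neg]
      ring
    have h2 := my_taylor_nonneg hch hMh (t := -t) (by linarith)
    rw [hPh] at h2
    simp only [neg_neg] at h2
    rw [abs_of_neg ht]
    exact h2

/-- One-dimensional version of the four-point estimator error bound. -/
lemma my_onedim {g : ℝ → ℝ} (hg : ContDiff ℝ 5 g) {M' k c : ℝ} (hk : 1 < k) (hc : 0 < c)
    (hM' : ∀ s, |iteratedDeriv 5 g s| ≤ M') :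
    |deriv g 0 - (-g (k*c) + k^3 * g c - k^3 * g (-c) + g (-(k*c))) / (2*k*(k^2-1)*c)|
      ≤ M' * (k^5 + k^3) / (24*k*(k^2-1)) * c^4 := by
  have hM0 : 0 ≤ M' := le_trans (abs_nonneg _) (hM' 0)
  have hk0 : 0 < k := by linarith
  have hk2 : 0 < k^2 - 1 := by nlinarith
  set D : ℝ := 2*k*(k^2-1)*c with hD
  have hDpos : 0 < D := by positivity
  set P : ℝ → ℝ := myP g with hPdef
  have hkey : -P (k*c) + k^3 * P c - k^3 * P (-c) + P (-(k*c)) = D * deriv g 0 := by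
    simp only [hPdef, myP, Finset.sum_range_succ, Finset.sum_range_zero,
      Nat.factorial, iteratedDeriv_one]
    push_cast
    ring
  set E : ℝ → ℝ := fun t => g t - P t with hE
  have hcomb : deriv g 0 - (-g (k*c) + k^3 * g c - k^3 * g (-c) + g (-(k*c))) / D
      = -((-E (k*c) + k^3 * E c - k^3 * E (-c) + E (-(k*c))) / D) := by
    field_simp
    simp only [hE]
    linarith [hkey]
  rw [hcomb, abs_neg, abs_div, abs_of_pos hDpos]
  have b1 := my_taylor hg hM' (k*c)
  have b2 := my_taylor hg hM' c
  have b3 := my_taylor hg hM' (-c)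
  have b4 := my_taylor hg hM' (-(k*c))
  rw [abs_of_pos (by positivity : (0:ℝ) < k*c)] at b1
  rw [abs_of_pos hc] at b2
  rw [abs_neg, abs_of_pos hc] at b3
  rw [abs_neg, abs_of_pos (by positivity : (0:ℝ) < k*c)] at b4
  have hEb : |(-E (k*c) + k^3 * E c - k^3 * E (-c) + E (-(k*c)))|
      ≤ M' * ((k*c)^5 + k^3 * c^5) / 12 := by
    have h1 : |E (k*c)| ≤ M' * (k*c)^5 / 24 := b1
    have h2 : |E c| ≤ M' * c^5 / 24 := b2
    have h3 : |E (-c)| ≤ M' * c^5 / 24 := b3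
    have h4 : |E (-(k*c))| ≤ M' * (k*c)^5 / 24 := b4
    have hk3 : (0:ℝ) < k^3 := by positivity
    calc |(-E (k*c) + k^3 * E c - k^3 * E (-c) + E (-(k*c)))|
        ≤ |E (k*c)| + k^3 * |E c| + k^3 * |E (-c)| + |E (-(k*c))| := by
          have := abs_add_le (-E (k*c) + k^3 * E c - k^3 * E (-c)) (E (-(k*c)))
          have := abs_add_le (-E (k*c) + k^3 * E c) (-(k^3 * E (-c)))
          have := abs_add_le (-E (k*c)) (k^3 * E c)
          simp only [abs_neg, abs_mul, abs_of_pos hk3, sub_eq_add_neg] at *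
          linarith
      _ ≤ M' * (k*c)^5 / 24 + k^3 * (M' * c^5 / 24) + k^3 * (M' * c^5 / 24)
            + M' * (k*c)^5 / 24 := by
          gcongr
      _ = M' * ((k*c)^5 + k^3 * c^5) / 12 := by ring
  calc |(-E (k*c) + k^3 * E c - k^3 * E (-c) + E (-(k*c)))| / D
      ≤ (M' * ((k*c)^5 + k^3 * c^5) / 12) / D := by gcongr
    _ = M' * (k^5 + k^3) / (24*k*(k^2-1)) * c^4 := by
        rw [hD]
        field_simp
        ring

/-- Iterated derivatives are translation invariant. -/
lemma my_translate {E F : Type*} [NormedAddCommGroup E] [NormedSpace ℝ E]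
    [NormedAddCommGroup F] [NormedSpace ℝ F] {f : E → F} (hf : ContDiff ℝ 5 f) (θ : E) :
    ∀ n : ℕ, n ≤ 5 → ∀ x, iteratedFDeriv ℝ n (fun y => f (θ + y)) x
      = iteratedFDeriv ℝ n f (θ + x) := by
  intro n
  induction n with
  | zero => intro _ x; ext m; simp
  | succ n IH =>
    intro hn x
    have hn5 : (n : WithTop ℕ∞) < 5 := by exact_mod_cast (by omega : n < 5)
    have hdn : Differentiable ℝ (iteratedFDeriv ℝ n f) :=
      hf.differentiable_iteratedFDeriv hn5
    have h1 : HasFDerivAt (fun y : E => θ + y) (ContinuousLinearMap.id ℝ E) x :=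
      (hasFDerivAt_id x).const_add θ
    have h2 : HasFDerivAt (fun y => iteratedFDeriv ℝ n f (θ + y))
        (fderiv ℝ (iteratedFDeriv ℝ n f) (θ + x)) x := by
      exact ((hdn (θ+x)).hasFDerivAt.comp x h1)
    have h3 : fderiv ℝ (iteratedFDeriv ℝ n (fun y => f (θ + y))) x
        = fderiv ℝ (iteratedFDeriv ℝ n f) (θ + x) := by
      have heq : iteratedFDeriv ℝ n (fun y => f (θ + y))
          = fun y => iteratedFDeriv ℝ n f (θ + y) := funext (IH (by omega))
      rw [heq]
      exact h2.fderiv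
    rw [iteratedFDeriv_succ_eq_comp_left, iteratedFDeriv_succ_eq_comp_left]
    simp only [Function.comp_apply, h3]

/-- The four-point gradient estimator has fourth-order error in `c` for the
directional derivative `∇f(θ)·w`, uniformly over `θ`, unit vectors `w` and scales
`c > 0`, when `f` is `C⁵` with bounded fifth derivative. -/
theorem stmt_4 (d : ℕ) (hd : 1 ≤ d) (k M : ℝ) (hk : 1 < k)
    (f : EuclideanSpace ℝ (Fin d) → ℝ) (hf : ContDiff ℝ 5 f)
    (hM : ∀ x : EuclideanSpace ℝ (Fin d), ‖iteratedFDeriv ℝ 5 f x‖ ≤ M) :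
    ∃ C : ℝ, ∀ (θ w : EuclideanSpace ℝ (Fin d)) (c : ℝ), ‖w‖ = 1 → 0 < c →
      |fderiv ℝ f θ w -
        (-f (θ + (k * c) • w) + k ^ 3 * f (θ + c • w) - k ^ 3 * f (θ - c • w)
          + f (θ - (k * c) • w)) / (2 * k * (k ^ 2 - 1) * c)|
        ≤ C * c ^ 4 := by
  refine ⟨M * (k^5 + k^3) / (24*k*(k^2-1)), ?_⟩
  intro θ w c hw hc
  set g : ℝ → ℝ := fun t => f (θ + t • w) with hg
  have hline : ContDiff ℝ 5 (fun t : ℝ => θ + t • w) :=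
    contDiff_const.add (contDiff_id.smul contDiff_const)
  have hcg : ContDiff ℝ 5 g := hf.comp hline
  -- the derivative of g at 0 is the directional derivative
  have hder : HasDerivAt g (fderiv ℝ f θ w) 0 := by
    have hl : HasDerivAt (fun t : ℝ => θ + t • w) w 0 := by
      simpa using ((hasDerivAt_id (0:ℝ)).smul_const w).const_add θ
    have hfd : HasFDerivAt f (fderiv ℝ f (θ + (0:ℝ) • w)) (θ + (0:ℝ) • w) :=
      (hf.differentiable (by norm_num) (θ + (0:ℝ) • w)).hasFDerivAt
    have := hfd.comp_hasDerivAt 0 hl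
    rw [zero_smul, add_zero] at this
    exact this
  -- bound the fifth derivative of g
  have hM5 : ∀ t : ℝ, |iteratedDeriv 5 g t| ≤ M := by
    intro t
    set L : ℝ →L[ℝ] EuclideanSpace ℝ (Fin d) :=
      ContinuousLinearMap.smulRight (ContinuousLinearMap.id ℝ ℝ) w with hL
    have hgL : g = (fun y => f (θ + y)) ∘ L := by
      funext s
      simp [hg, hL]
    have hft : ContDiff ℝ 5 (fun y : EuclideanSpace ℝ (Fin d) => f (θ + y)) :=
      hf.comp (contDiff_const.add contDiff_id)
    rw [iteratedDeriv_eq_iteratedFDeriv, hgL,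
      L.iteratedFDeriv_comp_right hft t (le_refl _)]
    simp only [ContinuousMultilinearMap.compContinuousLinearMap_apply]
    have hLt : L t = t • w := rfl
    have hL1 : ∀ i : Fin 5, L ((fun _ : Fin 5 => (1:ℝ)) i) = w := by
      intro i; simp [hL]
    rw [hLt, my_translate hf θ 5 (le_refl _) (t • w)]
    calc |iteratedFDeriv ℝ 5 f (θ + t • w) fun i => L ((fun _ : Fin 5 => (1:ℝ)) i)|
        = ‖iteratedFDeriv ℝ 5 f (θ + t • w) fun _ : Fin 5 => w‖ := by
          rw [funext hL1]; rfl
      _ ≤ ‖iteratedFDeriv ℝ 5 f (θ + t • w)‖ * ∏ _i : Fin 5, ‖w‖ :=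
          (iteratedFDeriv ℝ 5 f (θ + t • w)).le_opNorm _
      _ ≤ M := by
          rw [hw]
          simpa using hM (θ + t • w)
  have hmain := my_onedim hcg hk hc hM5
  rw [hder.deriv] at hmain
  have e1 : θ - c • w = θ + (-c) • w := by rw [neg_smul, sub_eq_add_neg]
  have e2 : θ - (k*c) • w = θ + (-(k*c)) • w := by rw [neg_smul, sub_eq_add_neg]
  rw [e1, e2]
  exact hmain
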